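/- For real ρ ≥ 0 and integers 3 ≤ ℓ ≤ n, 1 - μ_{n,ℓ} ≥ c·ℓ² n^{ℓ-1} / ((n+ρ+1)(n+ρ+2)⋯(n+ρ+ℓ)) for some absolute constant c > 0, where μ_{n,ℓ} = n(n-1)⋯(n-ℓ+1) / ((n+ρ+1)(n+ρ+2)⋯(n+ρ+ℓ)). -/

import Mathlib

noncomputable def mu (ρ : ℝ) (n ℓ : ℕ) : ℝ :=
  ((Nat.factorial n : ℝ) / (Nat.factorial (n - ℓ) : ℝ)) *
    (Real.Gamma ((n : ℝ) + ρ + 1) / Real.Gamma ((n : ℝ) + (ℓ : ℝ) + ρ + 1))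

/-- Gamma recursion iterated. -/
lemma gamma_add_nat_eq (x : ℝ) (hx : 0 < x) (k : ℕ) :
    Real.Gamma (x + k) = Real.Gamma x * ∏ i ∈ Finset.range k, (x + i) := by
  induction k with
  | zero => simp
  | succ k ih =>
      have hpos : 0 < x + k := by positivity
      have : x + (k + 1 : ℕ) = (x + k) + 1 := by push_cast; ring
      rw [this, Real.Gamma_add_one hpos.ne', ih, Finset.prod_range_succ]
      ring

lemma prod_Icc_eq_range (f : ℕ → ℝ) (k : ℕ) :
    ∏ i ∈ Finset.Icc 1 k, f i = ∏ i ∈ Finset.range k, f (i + 1) := by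
  induction k with
  | zero => simp
  | succ k ih =>
      rw [Finset.prod_Icc_succ_top (Nat.le_add_left 1 k), ih,
        Finset.prod_range_succ]

/-- Lower bound for the rising-type product. -/
lemma prod_lower (x : ℝ) (hx : 0 ≤ x) :
    ∀ k : ℕ, 1 ≤ k →
      x ^ k + ((k : ℝ) * (k + 1) / 2) * x ^ (k - 1) ≤ ∏ i ∈ Finset.Icc 1 k, (x + i) := by
  intro k hk
  induction k with
  | zero => omega
  | succ k ih =>
      rcases Nat.eq_or_lt_of_le hk with h1 | h1
      · simp [← h1]
      · have hk1 : 1 ≤ k := by omega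
        have ih' := ih hk1
        rw [Finset.prod_Icc_succ_top (Nat.le_add_left 1 k)]
        have hfac : (0 : ℝ) ≤ x + (k + 1 : ℕ) := by positivity
        have hmul : (x ^ k + ((k : ℝ) * (k + 1) / 2) * x ^ (k - 1)) * (x + (k + 1 : ℕ))
            ≤ (∏ i ∈ Finset.Icc 1 k, (x + i)) * (x + (k + 1 : ℕ)) := by
          apply mul_le_mul_of_nonneg_right ih' hfac
        refine le_trans ?_ hmul
        have hpow : x ^ (k - 1) * x = x ^ k := by
          rw [← pow_succ]
          congr 1
          omega
        have hsucc : ((k + 1 : ℕ) : ℝ) = (k : ℝ) + 1 := by push_cast; ring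
        have hx1 : 0 ≤ x ^ (k - 1) := pow_nonneg hx _
        have hxk : 0 ≤ x ^ k := pow_nonneg hx _
        have hk0 : (0 : ℝ) ≤ k := Nat.cast_nonneg k
        -- expand and compare
        have : x ^ (k + 1) = x ^ k * x := pow_succ x k
        rw [Nat.succ_sub_one, hsucc, this]
        nlinarith [mul_nonneg (mul_nonneg hk0 hk0) hxk, mul_nonneg hk0 hxk,
          mul_nonneg (mul_nonneg hk0 hk0) hx1, hpow]

theorem one_sub_mu_lower_bound :
    ∃ c : ℝ, 0 < c ∧ ∀ (ρ : ℝ), 0 ≤ ρ → ∀ n ℓ : ℕ, 3 ≤ ℓ → ℓ ≤ n →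
      1 - mu ρ n ℓ
        ≥ c * (ℓ : ℝ) ^ 2 * (n : ℝ) ^ (ℓ - 1) / ∏ i ∈ Finset.Icc 1 ℓ, ((n : ℝ) + ρ + (i : ℝ)) := by
  refine ⟨1/2, by norm_num, ?_⟩
  intro ρ hρ n ℓ hℓ hℓn
  set x : ℝ := (n : ℝ) + ρ + 1 with hxdef
  have hn1 : (1 : ℝ) ≤ n := by exact_mod_cast (le_trans (by omega : 1 ≤ ℓ) hℓn)
  have hx : 0 < x := by positivity
  -- denominator
  set D : ℝ := ∏ i ∈ Finset.Icc 1 ℓ, ((n : ℝ) + ρ + (i : ℝ)) with hD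
  have hDpos : 0 < D := by
    apply Finset.prod_pos
    intro i hi
    have : (1 : ℝ) ≤ (i : ℝ) := by exact_mod_cast (Finset.mem_Icc.mp hi).1
    nlinarith
  -- numerator
  set N : ℝ := ∏ i ∈ Finset.range ℓ, ((n : ℝ) - (i : ℝ)) with hN
  -- mu = N / D
  have hGamma : Real.Gamma ((n : ℝ) + (ℓ : ℝ) + ρ + 1) = Real.Gamma x * D := by
    have h1 : (n : ℝ) + (ℓ : ℝ) + ρ + 1 = x + (ℓ : ℕ) := by rw [hxdef]; push_cast; ring
    rw [h1, gamma_add_nat_eq x hx ℓ, hD, prod_Icc_eq_range (fun i => (n : ℝ) + ρ + (i : ℝ)) ℓ]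
    congr 1
    apply Finset.prod_congr rfl
    intro i _
    rw [hxdef]; push_cast; ring
  have hfact : ((Nat.factorial n : ℝ) / (Nat.factorial (n - ℓ) : ℝ)) = N := by
    have h1 : (Nat.factorial (n - ℓ)) * (Nat.descFactorial n ℓ) = Nat.factorial n :=
      Nat.factorial_mul_descFactorial hℓn
    have h2 : (Nat.factorial n : ℝ) = (Nat.factorial (n - ℓ) : ℝ) * (Nat.descFactorial n ℓ : ℝ) := by
      exact_mod_cast (h1.symm)
    have h3 : (Nat.descFactorial n ℓ : ℝ) = N := by
      rw [Nat.descFactorial_eq_prod_range, Nat.cast_prod, hN]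
      apply Finset.prod_congr rfl
      intro i hi
      have hi' : i ≤ n := le_trans (le_of_lt (Finset.mem_range.mp hi)) (le_trans (by omega) hℓn)
      push_cast [Nat.cast_sub hi']
      ring
    rw [h2, h3]
    field_simp
  have hGx : Real.Gamma x ≠ 0 := (Real.Gamma_pos_of_pos hx).ne'
  have hmu : mu ρ n ℓ = N / D := by
    rw [mu, hfact, hGamma]
    rw [show (n : ℝ) + ρ + 1 = x from rfl]
    field_simp
  -- key bound : D - N ≥ (ℓ(ℓ+1)/2) n^(ℓ-1)
  have hNle : N ≤ (n : ℝ) ^ ℓ := by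
    rw [hN]
    calc ∏ i ∈ Finset.range ℓ, ((n : ℝ) - (i : ℝ))
        ≤ ∏ _i ∈ Finset.range ℓ, (n : ℝ) := by
          apply Finset.prod_le_prod
          · intro i hi
            have : (i : ℝ) ≤ (n : ℝ) - 1 := by
              have hi' : i + 1 ≤ n := le_trans (Finset.mem_range.mp hi) (le_trans (by omega) hℓn)
              have : (i : ℝ) + 1 ≤ (n : ℝ) := by exact_mod_cast hi'
              linarith
            linarith
          · intro i _
            have : (0 : ℝ) ≤ (i : ℝ) := Nat.cast_nonneg i
            linarith
      _ = (n : ℝ) ^ ℓ := by rw [Finset.prod_const, Finset.card_range]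
  have hDge : (n : ℝ) ^ ℓ + ((ℓ : ℝ) * (ℓ + 1) / 2) * (n : ℝ) ^ (ℓ - 1) ≤ D := by
    calc (n : ℝ) ^ ℓ + ((ℓ : ℝ) * (ℓ + 1) / 2) * (n : ℝ) ^ (ℓ - 1)
        ≤ ∏ i ∈ Finset.Icc 1 ℓ, ((n : ℝ) + i) :=
          prod_lower (n : ℝ) (Nat.cast_nonneg n) ℓ (by omega)
      _ ≤ D := by
          rw [hD]
          apply Finset.prod_le_prod
          · intro i hi
            have : (1 : ℝ) ≤ (i : ℝ) := by exact_mod_cast (Finset.mem_Icc.mp hi).1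
            nlinarith
          · intro i _
            linarith
  have hgap : (1/2 : ℝ) * (ℓ : ℝ) ^ 2 * (n : ℝ) ^ (ℓ - 1) ≤ D - N := by
    have h1 : (1/2 : ℝ) * (ℓ : ℝ) ^ 2 * (n : ℝ) ^ (ℓ - 1)
        ≤ ((ℓ : ℝ) * (ℓ + 1) / 2) * (n : ℝ) ^ (ℓ - 1) := by
      apply mul_le_mul_of_nonneg_right _ (pow_nonneg (Nat.cast_nonneg n) _)
      have : (0 : ℝ) ≤ (ℓ : ℝ) := Nat.cast_nonneg ℓ
      nlinarith
    linarith
  rw [hmu, ge_iff_le, div_le_iff₀ hDpos]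
  have : 1 - N / D = (D - N) / D := by field_simp
  rw [this, div_mul_cancel₀ _ hDpos.ne']
  linarith
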